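/- If G is a bipartite graph containing no induced subgraph isomorphic to 2P_1+P_3 (the disjoint union of two isolated vertices and a path on three vertices), then ivc(G) = vc(G). -/
import Mathlib

open SimpleGraph

/-- `S` is an independent set of `G`. -/
def IsIS {V : Type*} (G : SimpleGraph V) (S : Set V) : Prop :=
  S.Pairwise fun u v => ¬ G.Adj u v

/-- `G` contains no induced subgraph isomorphic to `H`. -/
def HFree {W V : Type*} (H : SimpleGraph W) (G : SimpleGraph V) : Prop :=
  IsEmpty (H ↪g G)

/-- `G` is bipartite: the vertex set splits into two independent sets. -/
def IsBip {V : Type*} (G : SimpleGraph V) : Prop :=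
  ∃ X : Set V, IsIS G X ∧ IsIS G Xᶜ

/-- `S` is a vertex cover of `G`. -/
def IsVC {V : Type*} (G : SimpleGraph V) (S : Finset V) : Prop :=
  ∀ ⦃u v⦄, G.Adj u v → u ∈ S ∨ v ∈ S

/-- minimum size of a vertex cover. -/
noncomputable def vc {V : Type*} (G : SimpleGraph V) : ℕ :=
  sInf {n | ∃ S : Finset V, IsVC G S ∧ S.card = n}

/-- minimum size of an independent vertex cover. -/
noncomputable def ivc {V : Type*} (G : SimpleGraph V) : ℕ :=
  sInf {n | ∃ S : Finset V, IsVC G S ∧ IsIS G ↑S ∧ S.card = n}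

/-- `2P_1 + P_3`: two isolated vertices plus a path on three vertices. -/
def twoP1P3 : SimpleGraph (Fin 2 ⊕ Fin 3) :=
  SimpleGraph.fromRel fun u v =>
    (u = Sum.inr 0 ∧ v = Sum.inr 1) ∨ (u = Sum.inr 1 ∧ v = Sum.inr 2)

lemma build_embed {V : Type*} (G : SimpleGraph V) (y1 y2 x1 b x2 : V)
    (hy : y1 ≠ y2)
    (hx12 : x1 ≠ x2) (hx1b : x1 ≠ b) (hx2b : x2 ≠ b)
    (hy1x1 : y1 ≠ x1) (hy1x2 : y1 ≠ x2) (hy1b : y1 ≠ b)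
    (hy2x1 : y2 ≠ x1) (hy2x2 : y2 ≠ x2) (hy2b : y2 ≠ b)
    (a1 : G.Adj x1 b) (a2 : G.Adj x2 b)
    (n12 : ¬ G.Adj x1 x2) (ny : ¬ G.Adj y1 y2)
    (n11 : ¬ G.Adj y1 x1) (n12' : ¬ G.Adj y1 x2) (n1b : ¬ G.Adj y1 b)
    (n21 : ¬ G.Adj y2 x1) (n22 : ¬ G.Adj y2 x2) (n2b : ¬ G.Adj y2 b) :
    Nonempty (twoP1P3 ↪g G) := by
  have a1' := a1.symm
  have a2' := a2.symm
  have n12'' : ¬ G.Adj x2 x1 := fun h => n12 h.symm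
  have ny' : ¬ G.Adj y2 y1 := fun h => ny h.symm
  have m11 : ¬ G.Adj x1 y1 := fun h => n11 h.symm
  have m12 : ¬ G.Adj x2 y1 := fun h => n12' h.symm
  have m1b : ¬ G.Adj b y1 := fun h => n1b h.symm
  have m21 : ¬ G.Adj x1 y2 := fun h => n21 h.symm
  have m22 : ¬ G.Adj x2 y2 := fun h => n22 h.symm
  have m2b : ¬ G.Adj b y2 := fun h => n2b h.symm
  refine ⟨⟨⟨Sum.elim ![y1, y2] ![x1, b, x2], ?_⟩, ?_⟩⟩
  · intro u v h
    rcases u with u | u <;> rcases v with v | v <;> fin_cases u <;> fin_cases v <;>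
      simp_all
  · intro u v
    rcases u with u | u <;> rcases v with v | v <;> fin_cases u <;> fin_cases v <;>
      simp [twoP1P3, SimpleGraph.fromRel_adj] <;> tauto

theorem stmt_5 {V : Type*} [Fintype V] (G : SimpleGraph V)
    (hbip : IsBip G) (hfree : HFree twoP1P3 G) : ivc G = vc G := by
  classical
  obtain ⟨X, hX, hXc⟩ := hbip
  -- the two sides (non-isolated vertices only) as finsets
  set Xe : Finset V := Finset.univ.filter (fun v => v ∈ X ∧ ∃ w, G.Adj v w) with hXe
  set Ye : Finset V := Finset.univ.filter (fun v => v ∉ X ∧ ∃ w, G.Adj v w) with hYe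
  -- both are independent vertex covers
  have hXeVC : IsVC G Xe := by
    intro u v huv
    by_cases hu : u ∈ X
    · exact Or.inl (Finset.mem_filter.2 ⟨Finset.mem_univ u, hu, v, huv⟩)
    · have hv : v ∈ X := by
        by_contra hv
        exact hXc hu hv (G.ne_of_adj huv) huv
      exact Or.inr (Finset.mem_filter.2 ⟨Finset.mem_univ v, hv, u, huv.symm⟩)
  have hYeVC : IsVC G Ye := by
    intro u v huv
    by_cases hu : u ∈ X
    · have hv : v ∉ X := fun hv => hX hu hv (G.ne_of_adj huv) huv
      exact Or.inr (Finset.mem_filter.2 ⟨Finset.mem_univ v, hv, u, huv.symm⟩)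
    · exact Or.inl (Finset.mem_filter.2 ⟨Finset.mem_univ u, hu, v, huv⟩)
  have hXeIS : IsIS G ↑Xe := by
    intro u hu v hv hne
    exact hX (Finset.mem_filter.1 hu).2.1 (Finset.mem_filter.1 hv).2.1 hne
  have hYeIS : IsIS G ↑Ye := by
    intro u hu v hv hne
    exact hXc (Finset.mem_filter.1 hu).2.1 (Finset.mem_filter.1 hv).2.1 hne
  have hivcX : ivc G ≤ Xe.card := Nat.sInf_le ⟨Xe, hXeVC, hXeIS, rfl⟩
  have hivcY : ivc G ≤ Ye.card := Nat.sInf_le ⟨Ye, hYeVC, hYeIS, rfl⟩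
  -- vc ≤ ivc
  have hne_ivc : {n | ∃ S : Finset V, IsVC G S ∧ IsIS G ↑S ∧ S.card = n}.Nonempty :=
    ⟨Xe.card, Xe, hXeVC, hXeIS, rfl⟩
  have h1 : vc G ≤ ivc G := by
    obtain ⟨S, hSvc, _, hScard⟩ := Nat.sInf_mem hne_ivc
    exact Nat.sInf_le ⟨S, hSvc, hScard⟩
  -- ivc ≤ vc
  have hne_vc : {n | ∃ S : Finset V, IsVC G S ∧ S.card = n}.Nonempty :=
    ⟨(Finset.univ : Finset V).card, Finset.univ, fun u v _ => Or.inl (Finset.mem_univ u), rfl⟩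
  obtain ⟨S, hSvc, hScard⟩ := Nat.sInf_mem hne_vc
  have h2 : ivc G ≤ vc G := by
    rw [show vc G = S.card from hScard.symm]
    -- key claim: min(|Xe|,|Ye|) ≤ |S|
    by_contra hlt
    push_neg at hlt
    have hltX : S.card < Xe.card := lt_of_lt_of_le hlt hivcX
    have hltY : S.card < Ye.card := lt_of_lt_of_le hlt hivcY
    -- split S by side
    have hsplit : (S.filter (fun v => v ∈ X)).card + (S.filter (fun v => v ∉ X)).card = S.card :=
      Finset.card_filter_add_card_filter_not _
    -- |Xe \ S| > |S ∩ Y-side|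
    have hXsub : Xe ∩ S ⊆ S.filter (fun v => v ∈ X) := by
      intro v hv
      rw [Finset.mem_inter] at hv
      exact Finset.mem_filter.2 ⟨hv.2, (Finset.mem_filter.1 hv.1).2.1⟩
    have hYsub : Ye ∩ S ⊆ S.filter (fun v => v ∉ X) := by
      intro v hv
      rw [Finset.mem_inter] at hv
      exact Finset.mem_filter.2 ⟨hv.2, (Finset.mem_filter.1 hv.1).2.1⟩
    have hcard1 : (Xe \ S).card + (Xe ∩ S).card = Xe.card := Finset.card_sdiff_add_card_inter _ _
    have hcard2 : (Ye \ S).card + (Ye ∩ S).card = Ye.card := Finset.card_sdiff_add_card_inter _ _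
    have hA : (S.filter (fun v => v ∉ X)).card < (Xe \ S).card := by
      have := Finset.card_le_card hXsub
      omega
    have hA' : (S.filter (fun v => v ∈ X)).card < (Ye \ S).card := by
      have := Finset.card_le_card hYsub
      omega
    -- each vertex of Xe \ S has a chosen neighbor, which lies in S and outside X
    have hmapX : ∀ a ∈ Xe \ S, ∃ w, G.Adj a w ∧ w ∈ S.filter (fun v => v ∉ X) := by
      intro a ha
      rw [Finset.mem_sdiff] at ha
      obtain ⟨haXe, haS⟩ := ha
      obtain ⟨-, haX, w, hw⟩ := Finset.mem_filter.1 haXe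
      refine ⟨w, hw, Finset.mem_filter.2 ⟨?_, ?_⟩⟩
      · rcases hSvc hw with h | h
        · exact absurd h haS
        · exact h
      · intro hwX
        exact hX haX hwX (G.ne_of_adj hw) hw
    have hmapY : ∀ a ∈ Ye \ S, ∃ w, G.Adj a w ∧ w ∈ S.filter (fun v => v ∈ X) := by
      intro a ha
      rw [Finset.mem_sdiff] at ha
      obtain ⟨haYe, haS⟩ := ha
      obtain ⟨-, haX, w, hw⟩ := Finset.mem_filter.1 haYe
      refine ⟨w, hw, Finset.mem_filter.2 ⟨?_, ?_⟩⟩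
      · rcases hSvc hw with h | h
        · exact absurd h haS
        · exact h
      · by_contra hwX
        exact hXc haX hwX (G.ne_of_adj hw) hw
    -- totalize the choice functions
    have hmapX' : ∀ a : V, ∃ w, a ∈ Xe \ S → (G.Adj a w ∧ w ∈ S.filter (fun v => v ∉ X)) := by
      intro a
      by_cases h : a ∈ Xe \ S
      · obtain ⟨w, hw⟩ := hmapX a h
        exact ⟨w, fun _ => hw⟩
      · exact ⟨a, fun h' => absurd h' h⟩
    have hmapY' : ∀ a : V, ∃ w, a ∈ Ye \ S → (G.Adj a w ∧ w ∈ S.filter (fun v => v ∈ X)) := by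
      intro a
      by_cases h : a ∈ Ye \ S
      · obtain ⟨w, hw⟩ := hmapY a h
        exact ⟨w, fun _ => hw⟩
      · exact ⟨a, fun h' => absurd h' h⟩
    choose fX hfX using hmapX'
    choose fY hfY using hmapY'
    obtain ⟨x1, hx1, x2, hx2, hx12, hfeq⟩ :=
      Finset.exists_ne_map_eq_of_card_lt_of_maps_to hA (fun a ha => (hfX a ha).2)
    obtain ⟨y1, hy1, y2, hy2, hy12, -⟩ :=
      Finset.exists_ne_map_eq_of_card_lt_of_maps_to hA' (fun a ha => (hfY a ha).2)
    set b := fX x1 with hb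
    -- collect facts
    have hbS : b ∈ S := (Finset.mem_filter.1 (hfX x1 hx1).2).1
    have hbX : b ∉ X := (Finset.mem_filter.1 (hfX x1 hx1).2).2
    have hx1X : x1 ∈ X := (Finset.mem_filter.1 (Finset.mem_sdiff.1 hx1).1).2.1
    have hx2X : x2 ∈ X := (Finset.mem_filter.1 (Finset.mem_sdiff.1 hx2).1).2.1
    have hx1S : x1 ∉ S := (Finset.mem_sdiff.1 hx1).2
    have hx2S : x2 ∉ S := (Finset.mem_sdiff.1 hx2).2
    have hy1X : y1 ∉ X := (Finset.mem_filter.1 (Finset.mem_sdiff.1 hy1).1).2.1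
    have hy2X : y2 ∉ X := (Finset.mem_filter.1 (Finset.mem_sdiff.1 hy2).1).2.1
    have hy1S : y1 ∉ S := (Finset.mem_sdiff.1 hy1).2
    have hy2S : y2 ∉ S := (Finset.mem_sdiff.1 hy2).2
    have a1 : G.Adj x1 b := (hfX x1 hx1).1
    have a2 : G.Adj x2 b := hfeq ▸ (hfX x2 hx2).1
    -- nonadjacency: vertices outside the cover are pairwise nonadjacent
    have houtside : ∀ u v : V, u ∉ S → v ∉ S → ¬ G.Adj u v := by
      intro u v hu hv hadj
      rcases hSvc hadj with h | h
      · exact hu h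
      · exact hv h
    have := build_embed G y1 y2 x1 b x2 hy12 hx12
      (fun h => hbX (h ▸ hx1X)) (fun h => hbX (h ▸ hx2X))
      (fun h => hy1X (h ▸ hx1X)) (fun h => hy1X (h ▸ hx2X)) (fun h => hy1S (by rw [h]; exact hbS))
      (fun h => hy2X (h ▸ hx1X)) (fun h => hy2X (h ▸ hx2X)) (fun h => hy2S (by rw [h]; exact hbS))
      a1 a2
      (hX hx1X hx2X hx12)
      (hXc hy1X hy2X hy12)
      (houtside y1 x1 hy1S hx1S) (houtside y1 x2 hy1S hx2S)
      (fun h => hXc hy1X hbX (G.ne_of_adj h) h)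
      (houtside y2 x1 hy2S hx1S) (houtside y2 x2 hy2S hx2S)
      (fun h => hXc hy2X hbX (G.ne_of_adj h) h)
    exact hfree.false this.some
  exact le_antisymm h2 h1
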